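/- arXiv:math/0701225 — 4 statements merged into one kernel-verified Lean document; each statement's English description precedes it below -/
import Mathlib

section
/- Let G be a finite group and M a finitely generated ZG-module. For every prime p, the minimal number of QG-module generators of Q⊗M is at most the minimal number of ZG-module generators of M/pM. -/
noncomputable section

/-- The integral group ring ℤG. -/
abbrev ZG (G : Type*) [Group G] : Type _ := MonoidAlgebra ℤ G

/-- `dMod R M` is the minimal number of generators of `M` as an `R`-module. -/
def dMod (R M : Type*) [Ring R] [AddCommGroup M] [Module R M] : ℕ :=
  sInf {n | ∃ s : Finset M, s.card = n ∧ Submodule.span R (s : Set M) = ⊤}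

/-- The submodule `pM` of `M`. -/
def pMul (R M : Type*) [Ring R] [AddCommGroup M] [Module R M] (p : ℕ) : Submodule R M :=
  Submodule.span R {x : M | ∃ m : M, x = p • m}

/-- `dModP R M p` is the minimal number of generators of `M/pM` as an `R`-module. -/
def dModP (R M : Type*) [Ring R] [AddCommGroup M] [Module R M] (p : ℕ) : ℕ :=
  dMod R (M ⧸ pMul R M p)

/-- Minimal number of generators of the group `G`. -/
def dGrp (G : Type*) [Group G] : ℕ :=
  sInf {n | ∃ s : Finset G, s.card = n ∧ Subgroup.closure (s : Set G) = ⊤}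

/-- The augmentation ideal ΔG of ℤG: the kernel of the augmentation map ℤG → ℤ. -/
def aug (G : Type*) [Group G] : Ideal (ZG G) :=
  RingHom.ker ((MonoidAlgebra.lift ℤ ℤ G (1 : G →* ℤ)) : ZG G →ₐ[ℤ] ℤ).toRingHom

/-- `d_G(ΔG)`, minimal number of ℤG-module generators of the augmentation ideal. -/
def dAug (G : Type*) [Group G] : ℕ := dMod (ZG G) (aug G)

/-- `d_G(ΔG/pΔG)`. -/
def dAugP (G : Type*) [Group G] (p : ℕ) : ℕ := dModP (ZG G) (aug G) p

/-- The generation gap `gap(G) = d(G) - d_G(ΔG)` (as an integer). -/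
def gapZ (G : Type*) [Group G] : ℤ := (dGrp G : ℤ) - (dAug G : ℤ)

/-- `p` is a ΔG-prime: a prime with `d_G(ΔG) = d_G(ΔG/pΔG)`. -/
def IsAugPrime (G : Type*) [Group G] (p : ℕ) : Prop := p.Prime ∧ dAug G = dAugP G p

/-- ΔG is a Swan module: some prime is a ΔG-prime. -/
def AugSwan (G : Type*) [Group G] : Prop := ∃ p, IsAugPrime G p

/-- `dModQ R M` is the minimal number of elements of `M` generating `ℚ ⊗ M` over `ℚG`;
equivalently (for `R = ℤG`), the minimal `n` such that some `n` elements of `M` generate a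
`ℤG`-submodule with torsion quotient. -/
def dModQ (R M : Type*) [Ring R] [AddCommGroup M] [Module R M] : ℕ :=
  sInf {n | ∃ s : Finset M, s.card = n ∧
    ∀ m : M, ∃ k : ℤ, k ≠ 0 ∧ k • m ∈ Submodule.span R (s : Set M)}

/-- Auxiliary: membership in `pMul` means being a `p`-multiple. -/
lemma mem_pMul_iff' (R M : Type*) [Ring R] [AddCommGroup M] [Module R M] (p : ℕ) (x : M) :
    x ∈ pMul R M p ↔ ∃ m : M, x = p • m := by
  constructor
  · intro hx
    have h : pMul R M p ≤ LinearMap.range ((p : ℕ) • (LinearMap.id : M →ₗ[R] M)) := by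
      rw [pMul, Submodule.span_le]
      rintro y ⟨m, rfl⟩
      exact ⟨m, by simp⟩
    obtain ⟨m, hm⟩ := h hx
    exact ⟨m, by simpa using hm.symm⟩
  · rintro ⟨m, rfl⟩
    exact Submodule.subset_span ⟨m, rfl⟩

/-- for a finite group `G` and finitely generated `ℤG`-module `M`,
`d_G(ℚ ⊗ M) ≤ d_G(M/pM)` for every prime `p`. -/
theorem stmt1 (G : Type) [Group G] [Finite G]
    (M : Type) [AddCommGroup M] [Module (ZG G) M] [Module.Finite (ZG G) M]
    (p : ℕ) (hp : p.Prime) :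
    dModQ (ZG G) M ≤ dModP (ZG G) M p := by
  classical
  have : Fintype G := Fintype.ofFinite G
  have hZG : Module.Finite ℤ (ZG G) :=
    Module.Finite.of_basis (MonoidAlgebra.basis G ℤ : Module.Basis G ℤ (MonoidAlgebra ℤ G))
  have hfM : Module.Finite ℤ M := Module.Finite.trans (ZG G) M
  set P : Submodule (ZG G) M := pMul (ZG G) M p with hP
  -- The defining set for dModP is nonempty
  have hne : {n | ∃ s : Finset (M ⧸ P), s.card = n ∧
      Submodule.span (ZG G) (s : Set (M ⧸ P)) = ⊤}.Nonempty := by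
    have hq : Module.Finite (ZG G) (M ⧸ P) :=
      Module.Finite.of_surjective P.mkQ (Submodule.mkQ_surjective P)
    obtain ⟨s, hs⟩ := hq.fg_top
    exact ⟨s.card, s, rfl, hs⟩
  obtain ⟨s, hscard, hsspan⟩ := Nat.sInf_mem hne
  rw [dModP, dMod] at *
  rw [← hscard]
  -- lift the generators of M/pM to M
  have hsurj := Submodule.mkQ_surjective P
  set f : (M ⧸ P) → M := Function.surjInv hsurj with hf
  have hfr : ∀ q, P.mkQ (f q) = q := fun q => Function.surjInv_eq hsurj q
  have hfinj : Function.Injective f := Function.injective_surjInv hsurj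
  set t : Finset M := s.image f with ht
  have htcard : t.card = s.card := Finset.card_image_of_injective s hfinj
  set N : Submodule (ZG G) M := Submodule.span (ZG G) (t : Set M) with hN
  -- every m decomposes as y + p • z with y ∈ N
  have hdec : ∀ m : M, ∃ y ∈ N, ∃ z : M, m = y + p • z := by
    intro m
    have himg : P.mkQ '' (t : Set M) = (s : Set (M ⧸ P)) := by
      rw [ht, Finset.coe_image, ← Set.image_comp]
      have : P.mkQ ∘ f = id := funext hfr
      rw [this, Set.image_id]
    have hm : P.mkQ m ∈ Submodule.map P.mkQ N := by
      rw [hN, Submodule.map_span, himg, hsspan]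
      exact Submodule.mem_top
    obtain ⟨y, hy, hym⟩ := hm
    have hsub : m - y ∈ P := by
      rw [← Submodule.Quotient.mk_eq_zero]
      have : Submodule.Quotient.mk (p := P) (m - y) = P.mkQ m - P.mkQ y := by
        simp [Submodule.mkQ_apply, Submodule.Quotient.mk_sub]
      rw [this, hym, sub_self]
    obtain ⟨z, hz⟩ := (mem_pMul_iff' (ZG G) M p (m - y)).mp hsub
    exact ⟨y, hy, z, by rw [← hz]; abel⟩
  -- M/N is finite over ℤ and equals p·(M/N); Nakayama gives a uniform torsion witness
  have hQfin : Module.Finite ℤ (M ⧸ N) :=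
    Module.Finite.of_surjective (N.mkQ.toAddMonoidHom.toIntLinearMap)
      (Submodule.mkQ_surjective N)
  have hle : (⊤ : Submodule ℤ (M ⧸ N)) ≤ (Ideal.span {(p : ℤ)}) • ⊤ := by
    intro q _
    obtain ⟨m, rfl⟩ := Submodule.mkQ_surjective N q
    obtain ⟨y, hy, z, hz⟩ := hdec m
    have h1 : N.mkQ m = (p : ℤ) • N.mkQ z := by
      rw [hz, map_add, map_nsmul]
      have hy0 : N.mkQ y = 0 := (Submodule.Quotient.mk_eq_zero N).mpr hy
      rw [hy0, zero_add]
      norm_cast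
    rw [h1]
    exact Submodule.smul_mem_smul (Ideal.mem_span_singleton_self _) Submodule.mem_top
  obtain ⟨r, hr1, hr0⟩ :=
    Submodule.exists_sub_one_mem_and_smul_eq_zero_of_fg_of_le_smul
      (Ideal.span {(p : ℤ)}) ⊤ hQfin.fg_top hle
  have hrne : r ≠ 0 := by
    intro h
    rw [h, zero_sub] at hr1
    have hdvd : (p : ℤ) ∣ -1 := Ideal.mem_span_singleton.mp hr1
    have : (p : ℤ) ∣ 1 := (dvd_neg.mp hdvd)
    have hp1 : (p : ℤ) = 1 := Int.eq_one_of_dvd_one (by positivity) this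
    exact hp.ne_one (by exact_mod_cast hp1)
  refine Nat.sInf_le ⟨t, htcard, fun m => ⟨r, hrne, ?_⟩⟩
  rw [← hN, ← Submodule.Quotient.mk_eq_zero N]
  have : Submodule.Quotient.mk (p := N) (r • m) = r • N.mkQ m := by
    simp [Submodule.mkQ_apply]
  rw [this]
  exact hr0 _ Submodule.mem_top
end
end

section
/- Let H be a finitely generated group and G a homomorphic image of H with d(G) = d(H). If G has generation gap zero and the augmentation ideal ΔG is a Swan module, then H has generation gap zero, ΔH is a Swan module, and every ΔG-prime is a ΔH-prime. -/
noncomputable section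

section Aux

open MonoidAlgebra

lemma mem_aug_iff {G : Type} [Group G] {x : ZG G} :
    x ∈ aug G ↔ (MonoidAlgebra.lift ℤ ℤ G (1 : G →* ℤ)) x = 0 := Iff.rfl

lemma of_sub_one_mem {G : Type} [Group G] (g : G) :
    (MonoidAlgebra.of ℤ G g - 1 : ZG G) ∈ aug G := by
  simp [mem_aug_iff, map_sub, MonoidAlgebra.lift_of]

lemma aug_eq_span {G : Type} [Group G] (s : Finset G)
    (hs : Subgroup.closure (s : Set G) = ⊤) :
    Submodule.span (ZG G) ((fun g => MonoidAlgebra.of ℤ G g - 1) '' (s : Set G)) = aug G := by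
  set S := Submodule.span (ZG G) ((fun g => MonoidAlgebra.of ℤ G g - 1) '' (s : Set G)) with hS
  apply le_antisymm
  · rw [hS, Submodule.span_le]
    rintro _ ⟨g, _, rfl⟩
    exact of_sub_one_mem g
  · have key : ∀ g : G, (MonoidAlgebra.of ℤ G g - 1 : ZG G) ∈ S := by
      intro g
      have hg : g ∈ Subgroup.closure (s : Set G) := hs ▸ Subgroup.mem_top g
      induction hg using Subgroup.closure_induction with
      | mem x hx => exact Submodule.subset_span ⟨x, hx, rfl⟩
      | one => rw [map_one, sub_self]; exact S.zero_mem
      | mul x y hx hy px py =>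
          have hxy : (of ℤ G (x * y) - 1 : ZG G)
              = of ℤ G x * (of ℤ G y - 1) + (of ℤ G x - 1) := by
            rw [map_mul, mul_sub, mul_one]; abel
          rw [hxy]
          exact S.add_mem (by simpa [smul_eq_mul] using S.smul_mem (of ℤ G x) py) px
      | inv x hx px =>
          have hxi : (of ℤ G x⁻¹ - 1 : ZG G) = -(of ℤ G x⁻¹ * (of ℤ G x - 1)) := by
            rw [mul_sub, ← map_mul, inv_mul_cancel, map_one, mul_one, neg_sub]
          rw [hxi]
          exact S.neg_mem (by simpa [smul_eq_mul] using S.smul_mem (of ℤ G x⁻¹) px)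
    intro x hx
    have hx0 : (∑ g ∈ x.coeff.support, x.coeff g) = 0 := by
      have h := mem_aug_iff.1 hx
      rw [MonoidAlgebra.lift_apply, Finsupp.sum] at h
      simpa using h
    have hrepr : x = ∑ g ∈ x.coeff.support, x.coeff g • (of ℤ G g - 1 : ZG G) := by
      have e1 : (∑ g ∈ x.coeff.support, x.coeff g • (of ℤ G g - 1 : ZG G))
          = ((∑ g ∈ x.coeff.support, MonoidAlgebra.single g (x.coeff g) : ZG G))
            - (∑ g ∈ x.coeff.support, x.coeff g) • (1 : ZG G) := by
        rw [Finset.sum_smul, ← Finset.sum_sub_distrib]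
        refine Finset.sum_congr rfl fun g _ => ?_
        rw [smul_sub, MonoidAlgebra.of_apply, MonoidAlgebra.smul_single, smul_eq_mul, mul_one]
      have e2 := MonoidAlgebra.sum_coeff_single x
      rw [Finsupp.sum] at e2
      rw [e1, e2, hx0, zero_smul, sub_zero]
    rw [hrepr]
    refine Submodule.sum_mem _ fun g _ => ?_
    rw [zsmul_eq_mul]
    exact (by simpa [smul_eq_mul] using S.smul_mem ((x.coeff g : ℤ) : ZG G) (key g))

lemma dMod_le {R M : Type*} [Ring R] [AddCommGroup M] [Module R M] {n : ℕ}
    (h : ∃ s : Finset M, s.card ≤ n ∧ Submodule.span R (s : Set M) = ⊤) :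
    dMod R M ≤ n := by
  obtain ⟨s, h1, h2⟩ := h
  exact le_trans (Nat.sInf_le ⟨s, rfl, h2⟩) h1

lemma dMod_witness {R M : Type*} [Ring R] [AddCommGroup M] [Module R M]
    (h : ∃ s : Finset M, Submodule.span R (s : Set M) = ⊤) :
    ∃ s : Finset M, s.card = dMod R M ∧ Submodule.span R (s : Set M) = ⊤ := by
  obtain ⟨s, hs⟩ := h
  have : dMod R M ∈ {n | ∃ s : Finset M, s.card = n ∧ Submodule.span R (s : Set M) = ⊤} :=
    Nat.sInf_mem ⟨s.card, s, rfl, hs⟩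
  exact this

lemma transfer {R S M N : Type*} [Ring R] [Ring S] [AddCommGroup M] [AddCommGroup N]
    [Module R M] [Module S N] {φ : R →+* S} (hφ : Function.Surjective φ)
    (F : M →ₛₗ[φ] N) (hF : Function.Surjective F)
    {n : ℕ} (h : ∃ s : Finset M, s.card = n ∧ Submodule.span R (s : Set M) = ⊤) :
    ∃ t : Finset N, t.card ≤ n ∧ Submodule.span S (t : Set N) = ⊤ := by
  classical
  haveI : RingHomSurjective φ := ⟨hφ⟩
  obtain ⟨s, hcard, hspan⟩ := h
  refine ⟨s.image F, hcard ▸ Finset.card_image_le, ?_⟩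
  rw [Finset.coe_image, Submodule.span_image, hspan, Submodule.map_top,
    LinearMap.range_eq_top.2 hF]

lemma span_subtype_top_iff {R M : Type*} [Ring R] [AddCommGroup M] [Module R M]
    {p : Submodule R M} {t : Set ↥p} :
    Submodule.span R t = ⊤ ↔ Submodule.span R (p.subtype '' t) = p := by
  constructor
  · intro h
    rw [← Submodule.map_span, h, Submodule.map_subtype_top]
  · intro h
    apply Submodule.map_injective_of_injective p.injective_subtype
    rw [Submodule.map_span, h, Submodule.map_subtype_top]

section Phi
variable {H : Type} [Group H] {G : Type} [Group G] (f : H →* G)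

abbrev phi : ZG H →+* ZG G := MonoidAlgebra.mapDomainRingHom ℤ f

lemma phi_single (h : H) (c : ℤ) :
    phi f (MonoidAlgebra.single h c) = MonoidAlgebra.single (f h) c := MonoidAlgebra.mapDomain_single

lemma phi_surj (hf : Function.Surjective f) : Function.Surjective (phi f) := by
  intro y
  induction y using MonoidAlgebra.induction with
  | zero => exact ⟨0, map_zero _⟩
  | single_add g c y _ _ ih =>
    obtain ⟨x, hx⟩ := ih
    obtain ⟨h, rfl⟩ := hf g
    refine ⟨MonoidAlgebra.single h c + x, ?_⟩
    rw [map_add, hx]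
    congr 1
    exact phi_single f h c

lemma eps_phi (x : ZG H) :
    (MonoidAlgebra.lift ℤ ℤ G (1 : G →* ℤ)) (phi f x)
      = (MonoidAlgebra.lift ℤ ℤ H (1 : H →* ℤ)) x := by
  induction x using MonoidAlgebra.induction with
  | zero => simp
  | single_add h c x _ _ ih =>
    rw [map_add, map_add, map_add, ih, phi_single]
    congr 1
    rw [MonoidAlgebra.lift_single, MonoidAlgebra.lift_single]
    rfl

def gmap : ↥(aug H) →ₛₗ[phi f] ↥(aug G) where
  toFun x := ⟨phi f x.1, by
    rw [mem_aug_iff, eps_phi]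
    exact mem_aug_iff.1 x.2⟩
  map_add' x y := Subtype.ext (map_add (phi f) x.1 y.1)
  map_smul' r x := by
    apply Subtype.ext
    simp only [SetLike.val_smul, smul_eq_mul, map_mul]

lemma gmap_surj (hf : Function.Surjective f) : Function.Surjective (gmap f) := by
  rintro ⟨y, hy⟩
  obtain ⟨x, rfl⟩ := phi_surj f hf y
  refine ⟨⟨x, ?_⟩, rfl⟩
  rw [mem_aug_iff, ← eps_phi f]
  exact mem_aug_iff.1 hy

def gbar (p : ℕ) :
    (↥(aug H) ⧸ pMul (ZG H) (↥(aug H)) p) →ₛₗ[phi f]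
      (↥(aug G) ⧸ pMul (ZG G) (↥(aug G)) p) :=
  Submodule.mapQ _ _ (gmap f) (by
    rw [pMul, Submodule.span_le]
    rintro _ ⟨m, rfl⟩
    refine Submodule.mem_comap.2 ?_
    rw [map_nsmul]
    exact Submodule.subset_span ⟨_, rfl⟩)

lemma gbar_surj (hf : Function.Surjective f) (p : ℕ) :
    Function.Surjective (gbar f p) := by
  intro y
  obtain ⟨n, rfl⟩ := Submodule.mkQ_surjective _ y
  obtain ⟨m, rfl⟩ := gmap_surj f hf n
  refine ⟨Submodule.Quotient.mk m, ?_⟩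
  rw [gbar, Submodule.mapQ_apply]
  rfl

end Phi

end Aux

/-- if `H` is finitely generated, `G` is a homomorphic image of `H` with
`d(G) = d(H)`, `gap(G) = 0` and `ΔG` is a Swan module, then `gap(H) = 0`, `ΔH` is a Swan
module and every `ΔG`-prime is a `ΔH`-prime. -/
theorem stmt3 (H : Type) [Group H] (hH : Group.FG H)
    (G : Type) [Group G] (f : H →* G) (hf : Function.Surjective f)
    (hd : dGrp G = dGrp H)
    (hgap : gapZ G = 0) (hswan : AugSwan G) :
    gapZ H = 0 ∧ AugSwan H ∧ ∀ p : ℕ, IsAugPrime G p → IsAugPrime H p := by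
  classical
  obtain ⟨n0, s0, hs0card, hs0cl⟩ := Group.fg_iff'.1 hH
  obtain ⟨s, hscard, hscl⟩ :
      ∃ t : Finset H, t.card = dGrp H ∧ Subgroup.closure (t : Set H) = ⊤ :=
    Nat.sInf_mem (⟨s0.card, s0, rfl, hs0cl⟩ :
      Set.Nonempty {n | ∃ t : Finset H, t.card = n ∧ Subgroup.closure (t : Set H) = ⊤})
  have hw1 : ∃ t : Finset ↥(aug H), t.card ≤ dGrp H ∧
      Submodule.span (ZG H) (t : Set ↥(aug H)) = ⊤ := by
    refine ⟨s.image (fun h => (⟨MonoidAlgebra.of ℤ H h - 1, of_sub_one_mem h⟩ : ↥(aug H))),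
      hscard ▸ Finset.card_image_le, ?_⟩
    rw [span_subtype_top_iff, Finset.coe_image, Set.image_image]
    exact aug_eq_span s hscl
  have hAug_le : dAug H ≤ dGrp H := dMod_le hw1
  have hWAug : ∃ t : Finset ↥(aug H), t.card = dAug H ∧
      Submodule.span (ZG H) (t : Set ↥(aug H)) = ⊤ :=
    dMod_witness ⟨hw1.choose, hw1.choose_spec.2⟩
  have hq1 : ∀ q : ℕ, ∃ t : Finset (↥(aug H) ⧸ pMul (ZG H) (↥(aug H)) q),
      t.card ≤ dAug H ∧ Submodule.span (ZG H)
        (t : Set (↥(aug H) ⧸ pMul (ZG H) (↥(aug H)) q)) = ⊤ := by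
    intro q
    exact transfer (Function.surjective_id (α := ZG H))
      ((pMul (ZG H) (↥(aug H)) q).mkQ) (Submodule.mkQ_surjective _) hWAug
  have hq1' : ∀ q : ℕ, dAugP H q ≤ dAug H := fun q => dMod_le (hq1 q)
  have hq2 : ∀ q : ℕ, dAugP G q ≤ dAugP H q := by
    intro q
    obtain ⟨v, hv1, hv2⟩ := dMod_witness ⟨(hq1 q).choose, (hq1 q).choose_spec.2⟩
    obtain ⟨w, hwle, hwsp⟩ :=
      transfer (phi_surj f hf) (gbar f q) (gbar_surj f hf q) ⟨v, hv1, hv2⟩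
    exact dMod_le ⟨w, hwle, hwsp⟩
  have hGG : dGrp G = dAug G := by
    unfold gapZ at hgap; omega
  have key : ∀ q : ℕ, dAug G = dAugP G q → dAug H = dGrp H ∧ dAug H = dAugP H q := by
    intro q hqe
    have l1 : dGrp H ≤ dAugP H q := by
      calc dGrp H = dGrp G := hd.symm
        _ = dAug G := hGG
        _ = dAugP G q := hqe
        _ ≤ dAugP H q := hq2 q
    have l2 := hq1' q
    omega
  obtain ⟨p, hp, hpeq⟩ := hswan
  refine ⟨?_, ⟨p, hp, (key p hpeq).2⟩, fun q hq => ⟨hq.1, (key q hq.2).2⟩⟩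
  have h1 := (key p hpeq).1
  unfold gapZ
  omega
end
end

section
/- Let G be a group, M a finitely generated ZG-module, and π = {p_1,…,p_t} a finite set of primes. Then there exists a family (X_p)_{p∈π} of finite subsets of M such that for each p ∈ π the image of X_p in M/pM is a minimal ZG-generating set of M/pM, and X_p ⊇ X_q if and only if d_G(M/pM) ≥ d_G(M/qM). -/
noncomputable section

/-- existence of a nested π-family. For a finite set `π` of primes there is a
family `(X_p)_{p ∈ π}` of finite subsets of `M` such that for each `p ∈ π` the image of `X_p`
in `M/pM` is a minimal `ℤG`-generating set of `M/pM` (it generates, and `|X_p| = d_G(M/pM)`),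
and `X_p ⊇ X_q` iff `d_G(M/pM) ≥ d_G(M/qM)`. -/
theorem stmt5 (G : Type) [Group G]
    (M : Type) [AddCommGroup M] [Module (ZG G) M] [Module.Finite (ZG G) M]
    (π : Finset ℕ) (hπ : ∀ p ∈ π, p.Prime) :
    ∃ X : ℕ → Finset M,
      (∀ p ∈ π, (X p).card = dModP (ZG G) M p ∧
        Submodule.span (ZG G)
          ((Submodule.Quotient.mk (p := pMul (ZG G) M p)) '' (X p : Set M)) = ⊤) ∧
      (∀ p ∈ π, ∀ q ∈ π,
        X q ⊆ X p ↔ dModP (ZG G) M q ≤ dModP (ZG G) M p) := by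
  classical
  -- For each p, a generating finset of the quotient of minimal cardinality
  have hgen : ∀ p : ℕ, ∃ s : Finset (M ⧸ pMul (ZG G) M p),
      s.card = dModP (ZG G) M p ∧ Submodule.span (ZG G) (s : Set (M ⧸ pMul (ZG G) M p)) = ⊤ := by
    intro p
    have hfin : Module.Finite (ZG G) (M ⧸ pMul (ZG G) M p) :=
      Module.Finite.of_surjective (pMul (ZG G) M p).mkQ (Submodule.mkQ_surjective _)
    obtain ⟨s, hs⟩ := hfin.fg_top
    have hmem : dModP (ZG G) M p ∈
        {n | ∃ s : Finset (M ⧸ pMul (ZG G) M p), s.card = n ∧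
          Submodule.span (ZG G) (s : Set (M ⧸ pMul (ZG G) M p)) = ⊤} :=
      Nat.sInf_mem ⟨s.card, s, rfl, hs⟩
    exact hmem
  choose s hscard hsspan using hgen
  -- lifts of quotient elements
  have hliftex : ∀ (p : ℕ) (x : M ⧸ pMul (ZG G) M p), ∃ m : M,
      (Submodule.Quotient.mk (p := pMul (ZG G) M p)) m = x :=
    fun p x => Submodule.Quotient.mk_surjective _ x
  choose lf hlf using hliftex
  -- enumeration of s p
  let b : ∀ p : ℕ, Fin (dModP (ZG G) M p) → M ⧸ pMul (ZG G) M p :=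
    fun p i => ((s p).equivFin.symm (Fin.cast (hscard p).symm i) : M ⧸ pMul (ZG G) M p)
  have hbinj : ∀ p, Function.Injective (b p) := by
    intro p i1 i2 h
    have h1 := Subtype.val_injective h
    have h2 := (s p).equivFin.symm.injective h1
    exact Fin.ext (by simpa using congrArg Fin.val h2)
  have hbmem : ∀ p i, b p i ∈ s p := fun p i => ((s p).equivFin.symm _).2
  -- the interpolating lifted generators
  let a : ℕ → ℕ → M := fun p j =>
    if h : j < dModP (ZG G) M p then lf p (b p ⟨j, h⟩) else 0
  have hmka : ∀ p, ∀ j, ∀ h : j < dModP (ZG G) M p,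
      (Submodule.Quotient.mk (p := pMul (ZG G) M p)) (a p j) = b p ⟨j, h⟩ := by
    intro p j h
    simp only [a, dif_pos h]
    exact hlf p _
  -- CRT coefficients
  have hcex : ∀ p ∈ π, ∃ cp : ℤ, (p : ℤ) ∣ cp - 1 ∧ ∀ q ∈ π, q ≠ p → (q : ℤ) ∣ cp := by
    intro p hp
    have hcop : Nat.Coprime p (∏ q ∈ π.erase p, q) := by
      apply Nat.Coprime.prod_right
      intro q hq
      exact (Nat.coprime_primes (hπ p hp) (hπ q (Finset.mem_of_mem_erase hq))).mpr
        (Ne.symm (Finset.ne_of_mem_erase hq))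
    have hic : IsCoprime (p : ℤ) ((∏ q ∈ π.erase p, q : ℕ) : ℤ) := by
      rw [Int.isCoprime_iff_gcd_eq_one]
      exact_mod_cast hcop
    obtain ⟨u, v, huv⟩ := hic
    refine ⟨v * ((∏ q ∈ π.erase p, q : ℕ) : ℤ), ⟨-u, by linarith⟩, ?_⟩
    intro q hq hqp
    refine Dvd.dvd.mul_left ?_ v
    exact_mod_cast Int.natCast_dvd_natCast.mpr
      (Finset.dvd_prod_of_mem _ (Finset.mem_erase.mpr ⟨hqp, hq⟩))
  choose! c hc1 hc2 using hcex
  -- the interpolated sequence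
  let y : ℕ → M := fun j => ∑ p ∈ π, c p • a p j
  -- divisible scalars land in pM
  have hpmem : ∀ (p : ℕ) (z : ℤ), (p : ℤ) ∣ z → ∀ m : M, z • m ∈ pMul (ZG G) M p := by
    rintro p z ⟨e, rfl⟩ m
    apply Submodule.subset_span
    exact ⟨e • m, by rw [mul_smul, natCast_zsmul]⟩
  -- key congruence: y j ≡ a p j mod pM
  have hkey : ∀ p ∈ π, ∀ j, (Submodule.Quotient.mk (p := pMul (ZG G) M p)) (y j)
      = (Submodule.Quotient.mk (p := pMul (ZG G) M p)) (a p j) := by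
    intro p hp j
    rw [Submodule.Quotient.eq]
    have hysplit : y j - a p j = (c p - 1) • a p j + ∑ q ∈ π.erase p, c q • a q j := by
      have := Finset.add_sum_erase π (fun q => c q • a q j) hp
      simp only [y, ← this, sub_smul, one_smul]
      abel
    rw [hysplit]
    refine Submodule.add_mem _ (hpmem p _ (hc1 p hp) _) (Submodule.sum_mem _ ?_)
    intro q hq
    exact hpmem p _
      (hc2 q (Finset.mem_of_mem_erase hq) p hp (Ne.symm (Finset.ne_of_mem_erase hq))) _
  -- injectivity of y on range (d p)
  have hinj : ∀ p ∈ π, Set.InjOn y ((Finset.range (dModP (ZG G) M p)) : Set ℕ) := by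
    intro p hp j hj k hk hyk
    simp only [Finset.coe_range, Set.mem_Iio] at hj hk
    have h1 : b p ⟨j, hj⟩ = b p ⟨k, hk⟩ := by
      rw [← hmka p j hj, ← hmka p k hk, ← hkey p hp j, ← hkey p hp k, hyk]
    exact congrArg Fin.val (hbinj p h1)
  refine ⟨fun p => (Finset.range (dModP (ZG G) M p)).image y, ?_, ?_⟩
  · intro p hp
    constructor
    · rw [Finset.card_image_of_injOn (hinj p hp), Finset.card_range]
    · have himg : (Submodule.Quotient.mk (p := pMul (ZG G) M p)) ''
          (((Finset.range (dModP (ZG G) M p)).image y : Finset M) : Set M)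
          = ((s p : Set (M ⧸ pMul (ZG G) M p))) := by
        ext x
        simp only [Finset.coe_image, Finset.coe_range, Set.mem_image, Set.mem_Iio,
          Finset.mem_coe]
        constructor
        · rintro ⟨_, ⟨j, hj, rfl⟩, rfl⟩
          rw [hkey p hp j, hmka p j hj]
          exact hbmem p _
        · intro hx
          have hj : ((s p).equivFin ⟨x, hx⟩ : ℕ) < dModP (ZG G) M p :=
            (hscard p) ▸ ((s p).equivFin ⟨x, hx⟩).isLt
          refine ⟨y ((s p).equivFin ⟨x, hx⟩ : ℕ), ⟨_, hj, rfl⟩, ?_⟩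
          rw [hkey p hp _, hmka p _ hj]
          show ((s p).equivFin.symm (Fin.cast (hscard p).symm ⟨_, hj⟩) : _) = x
          have hcast : Fin.cast (hscard p).symm
              (⟨((s p).equivFin ⟨x, hx⟩ : ℕ), hj⟩ : Fin (dModP (ZG G) M p))
              = (s p).equivFin ⟨x, hx⟩ := Fin.ext rfl
          rw [hcast, Equiv.symm_apply_apply]
      rw [himg]
      exact hsspan p
  · intro p hp q hq
    constructor
    · intro hsub
      have hcard := Finset.card_le_card hsub
      rwa [Finset.card_image_of_injOn (hinj p hp),
        Finset.card_image_of_injOn (hinj q hq),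
        Finset.card_range, Finset.card_range] at hcard
    · intro hle
      exact Finset.image_subset_image (Finset.range_subset_range.mpr hle)
end
end

section
/- Let G be a finite cyclic group of order n generated by a, presented as F/R with F = ⟨x⟩ infinite cyclic and R = ⟨x^n⟩, and let C = ⟨c⟩ be infinite cyclic. Let S be the kernel of the natural surjection F * C → G × C. Then the relation module S/S' requires exactly 2 generators as a Z[G×C]-module: d_{G×C}(S/[S,S]) = 2. -/
noncomputable section

open scoped commutatorElement

/-- `dRelMod S` for a normal subgroup `S` of `E`: the minimal number of elements of `S`
that generate `S` modulo `S' = ⁅S,S⁆` together with all their `E`-conjugates. For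
`S = ker (E ↠ H)` this is exactly the minimal number of `ℤH`-module generators of the
relation module `S/S'` (the `ℤH`-span of the images of `T` is the subgroup generated by
all conjugates of `T` modulo `S'`). -/
def dRelMod {E : Type*} [Group E] (S : Subgroup E) : ℕ :=
  sInf {k | ∃ T : Finset E, (T : Set E) ⊆ (S : Set E) ∧ T.card = k ∧
    Subgroup.closure {x : E | ∃ t ∈ T, ∃ e : E, x = e * t * e⁻¹} ⊔ ⁅S, S⁆ = S}

namespace Stmt18Aux

/-- The integer Heisenberg group (free nilpotent of class 2 on two generators). -/
@[ext] structure Heis where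
  a : ℤ
  b : ℤ
  c : ℤ

instance : Mul Heis := ⟨fun u v => ⟨u.a + v.a, u.b + v.b, u.c + v.c + u.a * v.b⟩⟩
instance : One Heis := ⟨⟨0, 0, 0⟩⟩
instance : Inv Heis := ⟨fun u => ⟨-u.a, -u.b, -u.c + u.a * u.b⟩⟩

@[simp] lemma mul_a (u v : Heis) : (u * v).a = u.a + v.a := rfl
@[simp] lemma mul_b (u v : Heis) : (u * v).b = u.b + v.b := rfl
@[simp] lemma mul_c (u v : Heis) : (u * v).c = u.c + v.c + u.a * v.b := rfl
@[simp] lemma one_a : (1 : Heis).a = 0 := rfl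
@[simp] lemma one_b : (1 : Heis).b = 0 := rfl
@[simp] lemma one_c : (1 : Heis).c = 0 := rfl
@[simp] lemma inv_a (u : Heis) : u⁻¹.a = -u.a := rfl
@[simp] lemma inv_b (u : Heis) : u⁻¹.b = -u.b := rfl
@[simp] lemma inv_c (u : Heis) : u⁻¹.c = -u.c + u.a * u.b := rfl

instance : Group Heis where
  mul_assoc u v w := by ext <;> simp <;> ring
  one_mul u := by ext <;> simp
  mul_one u := by ext <;> simp
  inv_mul_cancel u := by ext <;> simp <;> ring

/-- generators -/
def xx : FreeGroup Bool := FreeGroup.of false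
def cc : FreeGroup Bool := FreeGroup.of true

/-- The Magnus/Heisenberg representation of the free group on two letters. -/
def phiH : FreeGroup Bool →* Heis :=
  FreeGroup.lift (fun b : Bool => if b then ⟨0, 1, 0⟩ else ⟨1, 0, 0⟩)

@[simp] lemma phiH_x : phiH xx = ⟨1, 0, 0⟩ := by simp [phiH, xx]
@[simp] lemma phiH_c : phiH cc = ⟨0, 1, 0⟩ := by simp [phiH, cc]

/-- The map to `G × C` from the theorem statement. -/
def phi (n : ℕ) : FreeGroup Bool →* Multiplicative (ZMod n) × Multiplicative ℤ :=
  FreeGroup.lift (fun b : Bool =>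
    if b then ((1 : Multiplicative (ZMod n)), Multiplicative.ofAdd (1 : ℤ))
    else (Multiplicative.ofAdd (1 : ZMod n), (1 : Multiplicative ℤ)))

/-- Abelianization of the Heisenberg group into the target. -/
def psi (n : ℕ) : Heis →* Multiplicative (ZMod n) × Multiplicative ℤ where
  toFun u := (Multiplicative.ofAdd ((u.a : ZMod n)), Multiplicative.ofAdd u.b)
  map_one' := by simp
  map_mul' u v := by
    simp [Prod.ext_iff, ← ofAdd_add]

lemma psi_phiH (n : ℕ) : (psi n).comp phiH = phi n := by
  apply FreeGroup.ext_hom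
  rintro (_ | _) <;> simp [phiH, phi, psi, Prod.ext_iff]

lemma ker_components {n : ℕ} {s : FreeGroup Bool} (hs : s ∈ (phi n).ker) :
    ((phiH s).a : ZMod n) = 0 ∧ (phiH s).b = 0 := by
  have h : (psi n) (phiH s) = 1 := by
    rw [← MonoidHom.comp_apply, psi_phiH]; exact hs
  have h1 := congrArg Prod.fst h
  have h2 := congrArg Prod.snd h
  simp [psi] at h1 h2
  exact ⟨h1, h2⟩

/-- the key invariant `S → ℤ × ℤ/n`, a homomorphism on `S` killing `[S,E]`. -/
def rho (n : ℕ) (e : FreeGroup Bool) : ℤ × ZMod n :=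
  ((phiH e).a, ((phiH e).c : ZMod n))

lemma rho_one (n : ℕ) : rho n 1 = 0 := by simp [rho, Prod.ext_iff]

lemma rho_mul (n : ℕ) (e f : FreeGroup Bool) (hf : (phiH f).b = 0) :
    rho n (e * f) = rho n e + rho n f := by
  simp [rho, Prod.ext_iff, hf]

lemma rho_inv (n : ℕ) (e : FreeGroup Bool) (he : (phiH e).b = 0) :
    rho n e⁻¹ = - rho n e := by
  simp [rho, Prod.ext_iff, he]

lemma rho_conj {n : ℕ} (e : FreeGroup Bool) {s : FreeGroup Bool}
    (ha : ((phiH s).a : ZMod n) = 0) (hb : (phiH s).b = 0) :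
    rho n (e * s * e⁻¹) = rho n s := by
  unfold rho
  refine Prod.ext ?_ ?_
  · simp only [map_mul, map_inv, mul_a, inv_a]; ring
  · have hc : (phiH (e * s * e⁻¹)).c = (phiH s).c - (phiH s).a * (phiH e).b := by
      simp only [map_mul, map_inv, mul_a, mul_b, mul_c, inv_a, inv_b, inv_c, hb]; ring
    rw [hc]; push_cast; rw [ha]; ring

lemma b_mem_ker {n : ℕ} (hn : 0 < n) {s : FreeGroup Bool} (hs : s ∈ (phi n).ker) :
    (phiH s).b = 0 := (ker_components hs).2

lemma rho_commutator {n : ℕ} {s t : FreeGroup Bool}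
    (hs : (phiH s).b = 0) (ht : (phiH t).b = 0) :
    rho n ⁅s, t⁆ = 0 := by
  have hst : (phiH (s * t)).b = 0 := by simp [hs, ht]
  have hsi : (phiH s⁻¹).b = 0 := by simp [hs]
  have hti : (phiH t⁻¹).b = 0 := by simp [ht]
  have hsti : (phiH (s * t * s⁻¹)).b = 0 := by simp [hs, ht]
  rw [commutatorElement_def, rho_mul n _ _ hti, rho_mul n _ _ hsi,
    rho_mul n _ _ ht, rho_inv n _ hs, rho_inv n _ ht]
  abel

lemma phiH_xpow (k : ℕ) : phiH (xx ^ k) = ⟨(k : ℤ), 0, 0⟩ := by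
  induction k with
  | zero => ext <;> simp
  | succ m ih => rw [pow_succ, map_mul, ih]; ext <;> simp <;> ring

lemma phiH_comm : phiH ⁅xx, cc⁆ = ⟨0, 0, 1⟩ := by
  rw [commutatorElement_def]
  simp only [map_mul, map_inv, phiH_x, phiH_c]
  ext <;> simp

end Stmt18Aux


namespace Stmt18Aux

lemma xpow_mem_ker (n : ℕ) : xx ^ n ∈ (phi n).ker := by
  have hx : phi n xx = (Multiplicative.ofAdd (1 : ZMod n), 1) := by simp [phi, xx]
  rw [MonoidHom.mem_ker, map_pow, hx, Prod.pow_mk, one_pow]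
  have : (Multiplicative.ofAdd (1 : ZMod n)) ^ n = Multiplicative.ofAdd ((n : ℕ) • (1 : ZMod n)) := by
    rw [ofAdd_nsmul]
  rw [this]
  simp [nsmul_eq_mul, ZMod.natCast_self]

lemma comm_mem_ker (n : ℕ) : ⁅xx, cc⁆ ∈ (phi n).ker := by
  rw [MonoidHom.mem_ker, map_commutatorElement]
  exact commutatorElement_eq_one_iff_commute.mpr (mul_comm _ _)

lemma ker_le_normalClosure (n : ℕ) :
    (phi n).ker ≤ Subgroup.normalClosure {xx ^ n, ⁅xx, cc⁆} := by
  set N := Subgroup.normalClosure ({xx ^ n, ⁅xx, cc⁆} : Set (FreeGroup Bool)) with hN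
  let q := QuotientGroup.mk' N
  have hxn : q (xx ^ n) = 1 := by
    rw [← MonoidHom.mem_ker, QuotientGroup.ker_mk']
    exact Subgroup.subset_normalClosure (by simp)
  have hcomm : Commute (q xx) (q cc) := by
    rw [← commutatorElement_eq_one_iff_commute, ← map_commutatorElement,
      ← MonoidHom.mem_ker, QuotientGroup.ker_mk']
    exact Subgroup.subset_normalClosure (by simp)
  have main : ∀ w : FreeGroup Bool, ∃ i j : ℤ,
      q w = (q xx) ^ i * (q cc) ^ j ∧
      phi n w = (Multiplicative.ofAdd ((i : ZMod n)), Multiplicative.ofAdd j) := by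
    intro w
    induction w using FreeGroup.induction_on with
    | C1 => exact ⟨0, 0, by simp, by simp [Prod.ext_iff]⟩
    | of b =>
      have hp : ∀ b : Bool, (pure b : FreeGroup Bool) = FreeGroup.of b := fun _ => rfl
      cases b
      · exact ⟨1, 0, by simp [xx], by simp [phi, Prod.ext_iff]⟩
      · exact ⟨0, 1, by simp [cc], by simp [phi, Prod.ext_iff]⟩
    | inv_of b hb =>
      obtain ⟨i, j, h1, h2⟩ := hb
      refine ⟨-i, -j, ?_, ?_⟩
      · rw [map_inv, h1, mul_inv_rev, ← zpow_neg, ← zpow_neg]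
        exact ((hcomm.zpow_zpow (-i) (-j)).symm.eq)
      · rw [map_inv, h2]
        simp [Prod.ext_iff, ← ofAdd_neg]
    | mul w1 w2 ih1 ih2 =>
      obtain ⟨i1, j1, h1a, h2a⟩ := ih1
      obtain ⟨i2, j2, h1b, h2b⟩ := ih2
      refine ⟨i1 + i2, j1 + j2, ?_, ?_⟩
      · rw [map_mul, h1a, h1b, zpow_add, zpow_add,
          (hcomm.symm.zpow_zpow j1 i2).mul_mul_mul_comm]
      · rw [map_mul, h2a, h2b]
        simp [Prod.ext_iff, ← ofAdd_add]
  intro w hw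
  rw [MonoidHom.mem_ker] at hw
  obtain ⟨i, j, h1, h2⟩ := main w
  rw [hw] at h2
  have h2' : ((i : ZMod n) = 0 ∧ j = 0) := by
    have := h2.symm
    rw [Prod.ext_iff] at this
    constructor
    · simpa using this.1
    · simpa using this.2
  obtain ⟨k, hk⟩ : (n : ℤ) ∣ i := (ZMod.intCast_zmod_eq_zero_iff_dvd i n).mp h2'.1
  rw [← QuotientGroup.ker_mk' N, MonoidHom.mem_ker]
  rw [h1, h2'.2, zpow_zero, mul_one, hk, zpow_mul, zpow_natCast, ← map_pow, hxn, one_zpow]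

/-- The subgroup of elements of `S` whose `rho`-value lies in `Z`. -/
def Psub (n : ℕ) (Z : AddSubgroup (ℤ × ZMod n)) : Subgroup (FreeGroup Bool) where
  carrier := {e | e ∈ (phi n).ker ∧ rho n e ∈ Z}
  one_mem' := ⟨one_mem _, by rw [rho_one]; exact zero_mem Z⟩
  mul_mem' := fun {e f} he hf => ⟨mul_mem he.1 hf.1, by
    rw [rho_mul n e f (ker_components hf.1).2]; exact add_mem he.2 hf.2⟩
  inv_mem' := fun {e} he => ⟨inv_mem he.1, by
    rw [rho_inv n e (ker_components he.1).2]; exact neg_mem he.2⟩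

end Stmt18Aux

namespace Stmt18Aux

lemma rho_xpow (n : ℕ) : rho n (xx ^ n) = ((n : ℤ), 0) := by
  simp [rho, phiH_xpow]

lemma rho_comm_val (n : ℕ) : rho n ⁅xx, cc⁆ = (0, 1) := by
  simp [rho, phiH_comm, -map_commutatorElement]

lemma lower_bound (n : ℕ) (hn : 1 < n) (T : Finset (FreeGroup Bool))
    (hsub : (T : Set (FreeGroup Bool)) ⊆ ((phi n).ker : Set (FreeGroup Bool)))
    (heq : Subgroup.closure {x : FreeGroup Bool | ∃ t ∈ T, ∃ e : FreeGroup Bool, x = e * t * e⁻¹}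
      ⊔ ⁅(phi n).ker, (phi n).ker⁆ = (phi n).ker) :
    2 ≤ T.card := by
  by_contra hlt
  push_neg at hlt
  have hT1 : T.card ≤ 1 := by omega
  obtain ⟨t₀, hT⟩ := Finset.card_le_one_iff_subset_singleton.mp hT1
  set Z : AddSubgroup (ℤ × ZMod n) := AddSubgroup.zmultiples (rho n t₀) with hZ
  have hSP : (phi n).ker ≤ Psub n Z := by
    conv_lhs => rw [← heq]
    apply sup_le
    · rw [Subgroup.closure_le]
      rintro x ⟨t, htT, e, rfl⟩
      have ht : t ∈ (phi n).ker := hsub htT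
      refine ⟨Subgroup.Normal.conj_mem inferInstance t ht e, ?_⟩
      rw [rho_conj e (ker_components ht).1 (ker_components ht).2]
      have ht0 : t = t₀ := by simpa using hT htT
      rw [ht0]
      exact AddSubgroup.mem_zmultiples _
    · rw [Subgroup.commutator_def, Subgroup.closure_le]
      rintro x ⟨g1, hg1, g2, hg2, rfl⟩
      refine ⟨?_, ?_⟩
      · rw [commutatorElement_def]
        exact mul_mem (mul_mem (mul_mem hg1 hg2) (inv_mem hg1)) (inv_mem hg2)
      · rw [rho_commutator (ker_components hg1).2 (ker_components hg2).2]
        exact zero_mem Z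
  have h1 : (((n : ℤ), (0 : ZMod n)) : ℤ × ZMod n) ∈ Z := by
    rw [← rho_xpow n]; exact (hSP (xpow_mem_ker n)).2
  have h2 : (((0 : ℤ), (1 : ZMod n)) : ℤ × ZMod n) ∈ Z := by
    rw [← rho_comm_val n]; exact (hSP (comm_mem_ker n)).2
  obtain ⟨k1, hk1⟩ := AddSubgroup.mem_zmultiples_iff.mp h1
  obtain ⟨k2, hk2⟩ := AddSubgroup.mem_zmultiples_iff.mp h2
  have hk1a : k1 * (rho n t₀).1 = (n : ℤ) := by
    have := congrArg Prod.fst hk1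
    simpa [zsmul_eq_mul] using this
  have hk2a : k2 * (rho n t₀).1 = 0 := by
    have := congrArg Prod.fst hk2
    simpa [zsmul_eq_mul] using this
  rcases mul_eq_zero.mp hk2a with hk20 | hg10
  · have := congrArg Prod.snd hk2
    rw [hk20] at this
    simp only [Prod.smul_snd, zero_zsmul] at this
    have h10 : (1 : ZMod n) = 0 := this.symm
    have hcast : ((1 : ℕ) : ZMod n) = 0 := by simpa using h10
    haveI : NeZero n := ⟨by omega⟩
    have hdvd : n ∣ 1 := (ZMod.natCast_eq_zero_iff 1 n).mp hcast
    have := Nat.le_of_dvd one_pos hdvd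
    omega
  · rw [hg10, mul_zero] at hk1a
    have : n = 0 := by exact_mod_cast hk1a.symm
    omega

end Stmt18Aux


/-- let `G` be a (nontrivial) finite cyclic group of order `n` generated by
`a`, presented as `F/R` with `F = ⟨x⟩` infinite cyclic and `R = ⟨xⁿ⟩`, and `C = ⟨c⟩`
infinite cyclic. Let `S` be the kernel of the natural surjection `F * C → G × C`
(sending `x ↦ (a,1)` and `c ↦ (1,c)`; here `F * C` is the free group on two letters).
Then the relation module `S/S'` requires exactly 2 generators as a `ℤ[G × C]`-module. -/
theorem stmt18 (n : ℕ) (hn : 1 < n) :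
    dRelMod (MonoidHom.ker
      (FreeGroup.lift (fun b : Bool =>
        if b then ((1 : Multiplicative (ZMod n)), Multiplicative.ofAdd (1 : ℤ))
        else (Multiplicative.ofAdd (1 : ZMod n), (1 : Multiplicative ℤ))))) = 2 := by
  classical
  show dRelMod (MonoidHom.ker (Stmt18Aux.phi n)) = 2
  open Stmt18Aux in
  set S := (Stmt18Aux.phi n).ker with hS
  have hxk := Stmt18Aux.xpow_mem_ker n
  have hck := Stmt18Aux.comm_mem_ker n
  set T : Finset (FreeGroup Bool) := {Stmt18Aux.xx ^ n, ⁅Stmt18Aux.xx, Stmt18Aux.cc⁆} with hTdef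
  have hsub : (T : Set (FreeGroup Bool)) ⊆ (S : Set (FreeGroup Bool)) := by
    intro t ht
    simp only [hTdef, Finset.coe_insert, Finset.coe_singleton, Set.mem_insert_iff,
      Set.mem_singleton_iff] at ht
    rcases ht with rfl | rfl
    · exact hxk
    · exact hck
  have hne : Stmt18Aux.xx ^ n ≠ ⁅Stmt18Aux.xx, Stmt18Aux.cc⁆ := by
    intro h
    have h2 := congrArg (fun e => (Stmt18Aux.phiH e).a) h
    simp only [Stmt18Aux.phiH_xpow, Stmt18Aux.phiH_comm] at h2
    have : n = 0 := by exact_mod_cast h2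
    omega
  have hcard : T.card = 2 := by
    rw [hTdef, Finset.card_insert_of_notMem (by simpa using hne), Finset.card_singleton]
  have hKeq : Subgroup.closure
      {x : FreeGroup Bool | ∃ t ∈ T, ∃ e : FreeGroup Bool, x = e * t * e⁻¹} ⊔ ⁅S, S⁆ = S := by
    apply le_antisymm
    · apply sup_le
      · rw [Subgroup.closure_le]
        rintro x ⟨t, htT, e, rfl⟩
        exact Subgroup.Normal.conj_mem inferInstance t (hsub htT) e
      · exact Subgroup.commutator_le_left S S
    · have h1 : Subgroup.normalClosure
          ({Stmt18Aux.xx ^ n, ⁅Stmt18Aux.xx, Stmt18Aux.cc⁆} : Set (FreeGroup Bool)) ≤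
          Subgroup.closure {x : FreeGroup Bool | ∃ t ∈ T, ∃ e : FreeGroup Bool, x = e * t * e⁻¹} := by
        have hdef : Subgroup.normalClosure
            ({Stmt18Aux.xx ^ n, ⁅Stmt18Aux.xx, Stmt18Aux.cc⁆} : Set (FreeGroup Bool)) =
            Subgroup.closure (Group.conjugatesOfSet
              ({Stmt18Aux.xx ^ n, ⁅Stmt18Aux.xx, Stmt18Aux.cc⁆} : Set (FreeGroup Bool))) := rfl
        rw [hdef]
        apply Subgroup.closure_mono
        intro x hx
        obtain ⟨a, ha, hconj⟩ := Group.mem_conjugatesOfSet_iff.mp hx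
        obtain ⟨e, he⟩ := isConj_iff.mp hconj
        have haT : a ∈ T := by
          rcases ha with rfl | ha
          · simp [hTdef]
          · simp [hTdef, Set.mem_singleton_iff.mp ha]
        exact ⟨a, haT, e, he.symm⟩
      exact le_trans (Stmt18Aux.ker_le_normalClosure n) (le_trans h1 le_sup_left)
  unfold dRelMod
  have h2mem' : (2 : ℕ) ∈ {k | ∃ T : Finset (FreeGroup Bool),
      (T : Set (FreeGroup Bool)) ⊆ (S : Set (FreeGroup Bool)) ∧ T.card = k ∧
      Subgroup.closure {x : FreeGroup Bool | ∃ t ∈ T, ∃ e : FreeGroup Bool, x = e * t * e⁻¹}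
        ⊔ ⁅S, S⁆ = S} := ⟨T, hsub, hcard, hKeq⟩
  refine le_antisymm (Nat.sInf_le h2mem') (le_csInf ⟨2, h2mem'⟩ ?_)
  rintro k ⟨T', hsub', rfl, heq'⟩
  exact Stmt18Aux.lower_bound n hn T' hsub' heq'
end
end
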